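/- An object F = (B, s, Y) is a finite object of the category iC if and only if B is a finite set and F is extensional. Moreover, in that case |Y| ≤ |Σ|^|B|. -/

import Mathlib

universe u

/-- A Chu space over `S`: objects `A`, attributes `X`, satisfaction `r`. -/
structure ChuSpace (S : Type u) : Type (u+1) where
  A : Type u
  X : Type u
  r : A → X → S

/-- A Chu morphism `(f, g)`. -/
@[ext]
structure ChuHom {S : Type u} (C D : ChuSpace S) : Type u where
  f : C.A → D.A
  g : D.X → C.X
  comm : ∀ a y, D.r (f a) y = C.r a (g y)

variable {S : Type u}

/-- Composition of Chu morphisms: `ψ.comp φ = ψ ∘ φ`. -/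
def ChuHom.comp {C D E : ChuSpace S} (ψ : ChuHom D E) (φ : ChuHom C D) : ChuHom C E where
  f := ψ.f ∘ φ.f
  g := φ.g ∘ ψ.g
  comm := fun a y => by
    simp only [Function.comp_apply]
    rw [ψ.comm, φ.comm]

def ChuHom.idHom (C : ChuSpace S) : ChuHom C C := ⟨id, id, fun _ _ => rfl⟩

/-- `φ` is an isomorphism of Chu spaces. -/
def ChuIso {C D : ChuSpace S} (φ : ChuHom C D) : Prop :=
  ∃ ψ : ChuHom D C, φ.comp ψ = ChuHom.idHom D ∧ ψ.comp φ = ChuHom.idHom C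

/-- No repeated columns. -/
def ChuExtensional (C : ChuSpace S) : Prop :=
  ∀ x y : C.X, (∀ a, C.r a x = C.r a y) → x = y

/-- No repeated rows. -/
def ChuSeparable (C : ChuSpace S) : Prop :=
  ∀ a b : C.A, (∀ x, C.r a x = C.r b x) → a = b

def ChuBiextensional (C : ChuSpace S) : Prop := ChuExtensional C ∧ ChuSeparable C

/-- Discrete: every function `A → S` is realized by a column. -/
def ChuDiscrete (C : ChuSpace S) : Prop :=
  ∀ f : C.A → S, ∃ x : C.X, ∀ a, C.r a x = f a

/-- `φ` is monic in the full subcategory of Chu spaces satisfying `Obj`. -/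
def MonicIn (Obj : ChuSpace S → Prop) {C D : ChuSpace S} (φ : ChuHom C D) : Prop :=
  ∀ (E : ChuSpace S), Obj E → ∀ ψ₁ ψ₂ : ChuHom E C,
    φ.comp ψ₁ = φ.comp ψ₂ → ψ₁ = ψ₂

/-- Monics of the category `C` of Chu spaces: injective forward, surjective backward. -/
def IsMonoC {C D : ChuSpace S} (φ : ChuHom C D) : Prop :=
  Function.Injective φ.f ∧ Function.Surjective φ.g

/-- Monics of the categories `E` and `B`: injective forward component. -/
def IsMonoE {C D : ChuSpace S} (φ : ChuHom C D) : Prop :=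
  Function.Injective φ.f

/-- An ω-sequence of Chu spaces. -/
structure ChuSeq (S : Type u) : Type (u+1) where
  C : ℕ → ChuSpace S
  φ : ∀ i, ChuHom (C i) (C (i+1))

/-- A cocone from the ω-sequence `T` to `C`. -/
structure Cocone (T : ChuSeq S) (C : ChuSpace S) : Type u where
  ψ : ∀ i, ChuHom (T.C i) C
  compat : ∀ i, (ψ (i+1)).comp (T.φ i) = ψ i

/-- `c` is a colimit of `T` in the subcategory with objects `Obj` and morphisms `Mor`. -/
structure IsColimit (Obj : ChuSpace S → Prop)
    (Mor : ∀ C D : ChuSpace S, ChuHom C D → Prop)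
    (T : ChuSeq S) (C : ChuSpace S) (c : Cocone T C) : Prop where
  obj : Obj C
  mor : ∀ i, Mor _ _ (c.ψ i)
  univ : ∀ (C' : ChuSpace S), Obj C' → ∀ (c' : Cocone T C'), (∀ i, Mor _ _ (c'.ψ i)) →
      ∃! μ : ChuHom C C', Mor _ _ μ ∧ ∀ i, μ.comp (c.ψ i) = c'.ψ i

/-- A finite object in the subcategory `(Obj, Mor)`: every morphism into a colimit of an
ω-sequence factors through some stage. -/
def FiniteObjIn (Obj : ChuSpace S → Prop) (Mor : ∀ C D : ChuSpace S, ChuHom C D → Prop)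
    (F : ChuSpace S) : Prop :=
  Obj F ∧ ∀ (T : ChuSeq S), (∀ i, Obj (T.C i)) → (∀ i, Mor _ _ (T.φ i)) →
    ∀ (C : ChuSpace S) (c : Cocone T C), IsColimit Obj Mor T C c →
      ∀ φ : ChuHom F C, Mor _ _ φ →
        ∃ (i : ℕ) (ψ : ChuHom F (T.C i)), Mor _ _ ψ ∧ (c.ψ i).comp ψ = φ

/-- Strongly finite: a finite object of `iC` with finite object set,
finite and non-empty attribute set. -/
def StronglyFinite (F : ChuSpace S) : Prop :=
  FiniteObjIn (fun _ => True) (fun _ _ φ => IsMonoC φ) F ∧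
    Finite F.A ∧ Finite F.X ∧ Nonempty F.X


namespace Stmt16Aux

variable {S : Type u}

lemma hom_ext {C D : ChuSpace S} {φ ψ : ChuHom C D}
    (hf : ∀ a, φ.f a = ψ.f a) (hg : ∀ x, φ.g x = ψ.g x) : φ = ψ :=
  ChuHom.ext (funext hf) (funext hg)

lemma comp_f {C D E : ChuSpace S} (ψ : ChuHom D E) (φ : ChuHom C D) (a : C.A) :
    (ψ.comp φ).f a = ψ.f (φ.f a) := rfl

lemma comp_g {C D E : ChuSpace S} (ψ : ChuHom D E) (φ : ChuHom C D) (x : E.X) :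
    (ψ.comp φ).g x = φ.g (ψ.g x) := rfl

lemma idHom_mono (C : ChuSpace S) : IsMonoC (ChuHom.idHom C) :=
  ⟨fun _ _ h => h, fun x => ⟨x, rfl⟩⟩

lemma idHom_comp {C D : ChuSpace S} (φ : ChuHom C D) : (ChuHom.idHom D).comp φ = φ :=
  hom_ext (fun _ => rfl) (fun _ => rfl)

lemma comp_assoc {C D E G : ChuSpace S} (χ : ChuHom E G) (ψ : ChuHom D E) (φ : ChuHom C D) :
    (χ.comp ψ).comp φ = χ.comp (ψ.comp φ) :=
  hom_ext (fun _ => rfl) (fun _ => rfl)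

/-- In any colimit of `iC`, the images of the forward components cover the apex. -/
lemma covering {T : ChuSeq S} {C : ChuSpace S} {c : Cocone T C}
    (h : IsColimit (fun _ => True) (fun _ _ φ => IsMonoC φ) T C c) (a : C.A) :
    ∃ i aᵢ, (c.ψ i).f aᵢ = a := by
  classical
  let C0 : ChuSpace S := ⟨{a : C.A // ∃ i aᵢ, (c.ψ i).f aᵢ = a}, C.X, fun a x => C.r a.1 x⟩
  let c0 : Cocone T C0 :=
    { ψ := fun i => ⟨fun aᵢ => ⟨(c.ψ i).f aᵢ, i, aᵢ, rfl⟩, (c.ψ i).g,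
        fun aᵢ x => (c.ψ i).comm aᵢ x⟩
      compat := fun i => by
        apply hom_ext
        · intro aᵢ
          apply Subtype.ext
          exact congrFun (congrArg ChuHom.f (c.compat i)) aᵢ
        · intro x
          exact congrFun (congrArg ChuHom.g (c.compat i)) x }
  have hc0mor : ∀ i, IsMonoC (c0.ψ i) := by
    intro i
    constructor
    · intro a₁ a₂ hh
      exact (h.mor i).1 (congrArg Subtype.val hh)
    · exact (h.mor i).2
  obtain ⟨μ, ⟨hμmor, hμcompat⟩, -⟩ := h.univ C0 trivial c0 hc0mor
  let ν : ChuHom C0 C := ⟨Subtype.val, id, fun a x => rfl⟩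
  obtain ⟨ρ, -, hρuniq⟩ := h.univ C trivial c h.mor
  have h1 : ChuHom.idHom C = ρ :=
    hρuniq _ ⟨idHom_mono C, fun i => idHom_comp _⟩
  have h2 : ν.comp μ = ρ := by
    apply hρuniq
    constructor
    · exact ⟨fun a₁ a₂ hh => hμmor.1 (Subtype.ext hh), fun x => hμmor.2 x⟩
    · intro i
      rw [comp_assoc, hμcompat i]
      apply hom_ext
      · intro aᵢ; rfl
      · intro x; rfl
  have key : (ν.comp μ).f a = a := by
    rw [h2, ← h1]; rfl
  exact (μ.f a).2.imp (fun i hi => hi.imp fun aᵢ haᵢ => haᵢ.trans key)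

/-- Sufficiency: finite carrier and extensional implies finite object. -/
theorem suff (F : ChuSpace S) (hA : Finite F.A) (hext : ChuExtensional F) :
    FiniteObjIn (fun _ => True) (fun _ _ φ => IsMonoC φ) F := by
  classical
  refine ⟨trivial, ?_⟩
  intro T _ hmor C c hcolim φ hφ
  have hcov : ∀ a : C.A, ∃ i aᵢ, (c.ψ i).f aᵢ = a := covering hcolim
  have hmono : ∀ i k (a : C.A), (∃ b, (c.ψ i).f b = a) → ∃ b, (c.ψ (i + k)).f b = a := by
    intro i k
    induction k with
    | zero => intro a ha; exact ha
    | succ k ih =>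
      intro a ha
      obtain ⟨b, hb⟩ := ih a ha
      exact ⟨(T.φ (i + k)).f b,
        (congrFun (congrArg ChuHom.f (c.compat (i + k))) b).trans hb⟩
  have hstage : ∀ b : F.A, ∃ i, ∃ bb, (c.ψ i).f bb = φ.f b := fun b => hcov (φ.f b)
  choose idx pick hpick using hstage
  have : Fintype F.A := Fintype.ofFinite F.A
  set N := Finset.univ.sup idx with hN
  have hNb : ∀ b : F.A, ∃ bb, (c.ψ N).f bb = φ.f b := by
    intro b
    have hle : idx b ≤ N := Finset.le_sup (Finset.mem_univ b)
    have := hmono (idx b) (N - idx b) (φ.f b) ⟨pick b, hpick b⟩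
    rwa [show idx b + (N - idx b) = N by omega] at this
  choose ψf hψf using hNb
  have hgsurj : Function.Surjective (c.ψ N).g := (hcolim.mor N).2
  have W : ∀ x₁ x₂ : C.X, (c.ψ N).g x₁ = (c.ψ N).g x₂ → φ.g x₁ = φ.g x₂ := by
    intro x₁ x₂ hx
    apply hext
    intro b
    have e1 : ∀ x, F.r b (φ.g x) = (T.C N).r (ψf b) ((c.ψ N).g x) := by
      intro x
      rw [← φ.comm b x, ← hψf b, (c.ψ N).comm]
    rw [e1 x₁, e1 x₂, hx]
  choose sec hsec using hgsurj
  have key : ∀ x, φ.g (sec ((c.ψ N).g x)) = φ.g x := fun x => W _ _ (hsec ((c.ψ N).g x))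
  refine ⟨N, ⟨ψf, fun x' => φ.g (sec x'), ?_⟩, ⟨?_, ?_⟩, ?_⟩
  · intro b x'
    have h1 : (T.C N).r (ψf b) x' = (T.C N).r (ψf b) ((c.ψ N).g (sec x')) := by
      rw [hsec x']
    rw [h1, ← (c.ψ N).comm, hψf, φ.comm]
  · intro a₁ a₂ hh
    apply hφ.1
    rw [← hψf a₁, ← hψf a₂]
    exact congrArg (c.ψ N).f hh
  · intro y
    obtain ⟨x, hx⟩ := hφ.2 y
    exact ⟨(c.ψ N).g x, by simpa [key x] using hx⟩
  · exact hom_ext (fun a => hψf a) (fun x => key x)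

end Stmt16Aux
namespace Stmt16Aux
section InfCase

variable {S : Type u} (F : ChuSpace S) (e : ℕ ↪ F.A)

def stI (i : ℕ) : ChuSpace S := ⟨{b : F.A // ∀ j, i ≤ j → b ≠ e j}, F.X, fun a x => F.r a.1 x⟩

def TI : ChuSeq S :=
  ⟨stI F e, fun i =>
    ⟨fun a => ⟨a.1, fun j hj => a.2 j (Nat.le_of_succ_le hj)⟩, id, fun _ _ => rfl⟩⟩

def cI : Cocone (TI F e) F :=
  ⟨fun _ => ⟨fun a => a.1, id, fun _ _ => rfl⟩,
   fun _ => hom_ext (fun _ => rfl) (fun _ => rfl)⟩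

lemma coverI : ∀ b : F.A, ∃ i, ∀ j, i ≤ j → b ≠ e j := by
  intro b
  by_cases h : ∃ j, b = e j
  · obtain ⟨j, rfl⟩ := h
    refine ⟨j + 1, fun k hk heq => ?_⟩
    have := e.injective heq
    omega
  · exact ⟨0, fun j _ hb => h ⟨j, hb⟩⟩

variable {C' : ChuSpace S} (c' : Cocone (TI F e) C')

lemma gI_const : ∀ i, (c'.ψ i).g = (c'.ψ 0).g := by
  intro i
  induction i with
  | zero => rfl
  | succ i ih =>
    rw [← ih]
    funext x
    exact congrFun (congrArg ChuHom.g (c'.compat i)) x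

lemma fI_coh : ∀ (b : F.A) i i' (h : ∀ j, i ≤ j → b ≠ e j) (h' : ∀ j, i' ≤ j → b ≠ e j),
    (c'.ψ i).f ⟨b, h⟩ = (c'.ψ i').f ⟨b, h'⟩ := by
  have step : ∀ (b : F.A) i (h : ∀ j, i ≤ j → b ≠ e j),
      (c'.ψ i).f ⟨b, h⟩ = (c'.ψ (i+1)).f ⟨b, fun j hj => h j (Nat.le_of_succ_le hj)⟩ := by
    intro b i h
    exact (congrFun (congrArg ChuHom.f (c'.compat i)) ⟨b, h⟩).symm
  have up : ∀ (b : F.A) i k (h : ∀ j, i ≤ j → b ≠ e j),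
      (c'.ψ i).f ⟨b, h⟩ = (c'.ψ (i+k)).f ⟨b, fun j hj => h j (le_trans (Nat.le_add_right i k) hj)⟩ := by
    intro b i k
    induction k with
    | zero => intro h; rfl
    | succ k ih =>
      intro h
      rw [ih h, step b (i+k)]
      rfl
  intro b i i' h h'
  rcases Nat.le_total i i' with hle | hle
  · obtain ⟨k, rfl⟩ := Nat.le.dest hle
    exact up b i k h
  · obtain ⟨k, rfl⟩ := Nat.le.dest hle
    exact (up b i' k h').symm

include e in
theorem notFiniteObj_of_infinite :
    ¬ FiniteObjIn (fun _ => True) (fun _ _ φ => IsMonoC φ) F := by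
  classical
  intro hF
  have hTmor : ∀ i, IsMonoC ((TI F e).φ i) := by
    intro i
    refine ⟨fun a b h => ?_, fun x => ⟨x, rfl⟩⟩
    apply Subtype.ext
    have h' : (((TI F e).φ i).f a).1 = (((TI F e).φ i).f b).1 := congrArg Subtype.val h
    exact h'
  have hcmor : ∀ i, IsMonoC ((cI F e).ψ i) := by
    intro i
    exact ⟨fun a b h => Subtype.ext h, fun x => ⟨x, rfl⟩⟩
  have hcolim : IsColimit (fun _ => True) (fun _ _ φ => IsMonoC φ) (TI F e) F (cI F e) := by
    refine ⟨trivial, hcmor, ?_⟩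
    intro C' _ c' hm'
    have hst : ∀ b : F.A, ∀ j, Classical.choose (coverI F e b) ≤ j → b ≠ e j :=
      fun b => Classical.choose_spec (coverI F e b)
    refine ⟨⟨fun b => (c'.ψ (Classical.choose (coverI F e b))).f ⟨b, hst b⟩,
      (c'.ψ 0).g, ?_⟩, ⟨⟨?_, ?_⟩, ?_⟩, ?_⟩
    · intro b x'
      rw [(c'.ψ (Classical.choose (coverI F e b))).comm ⟨b, hst b⟩ x',
        gI_const F e c' (Classical.choose (coverI F e b))]
      rfl
    · -- injective
      intro b₁ b₂ hh
      set i := max (Classical.choose (coverI F e b₁)) (Classical.choose (coverI F e b₂)) with hi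
      have m₁ : ∀ j, i ≤ j → b₁ ≠ e j := fun j hj => hst b₁ j (le_trans (le_max_left _ _) hj)
      have m₂ : ∀ j, i ≤ j → b₂ ≠ e j := fun j hj => hst b₂ j (le_trans (le_max_right _ _) hj)
      rw [fI_coh F e c' b₁ _ i (hst b₁) m₁, fI_coh F e c' b₂ _ i (hst b₂) m₂] at hh
      have := (hm' i).1 hh
      exact congrArg Subtype.val this
    · exact (hm' 0).2
    · intro i
      apply hom_ext
      · intro a
        exact fI_coh F e c' a.1 _ i (hst a.1) a.2
      · intro x
        exact (congrFun (gI_const F e c' i) x).symm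
    · intro μ' ⟨hμ'm, hμ'c⟩
      apply hom_ext
      · intro b
        have := congrFun (congrArg ChuHom.f (hμ'c (Classical.choose (coverI F e b)))) ⟨b, hst b⟩
        exact this
      · intro x
        exact congrFun (congrArg ChuHom.g (hμ'c 0)) x
  obtain ⟨i, ψ, hψm, hfac⟩ := hF.2 (TI F e) (fun _ => trivial) hTmor F (cI F e) hcolim
    (ChuHom.idHom F) (idHom_mono F)
  have hf := congrFun (congrArg ChuHom.f hfac) (e i)
  -- hf : ((cI F e).ψ i).f (ψ.f (e i)) = e i, i.e. (ψ.f (e i)).val = e i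
  exact (ψ.f (e i)).2 i le_rfl hf

end InfCase
end Stmt16Aux
namespace Stmt16Aux
section ExtCase

variable {S : Type u} (F : ChuSpace S) (y0 : F.X)

def Qt (i : ℕ) : Type u := {q : ULift.{u} (ℕ × Bool) // q.down.1 < i ∨ q.down.2 = false}

def stC (i : ℕ) : ChuSpace S :=
  ⟨F.A, F.X ⊕ Qt i, fun a => Sum.elim (F.r a) (fun _ => F.r a y0)⟩

def bigC : ChuSpace S :=
  ⟨F.A, F.X ⊕ ULift.{u} (ℕ × Bool), fun a => Sum.elim (F.r a) (fun _ => F.r a y0)⟩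

def truncB (i : ℕ) (p : ℕ × Bool) : ℕ × Bool := (p.1, p.2 && decide (p.1 < i))

lemma truncB_mem (i : ℕ) (p : ℕ × Bool) : (truncB i p).1 < i ∨ (truncB i p).2 = false := by
  by_cases h : p.1 < i
  · exact Or.inl h
  · right; simp [truncB, h]

lemma truncB_truncB (i : ℕ) (p : ℕ × Bool) : truncB i (truncB (i+1) p) = truncB i p := by
  unfold truncB
  by_cases h : p.1 < i
  · simp [h, Nat.lt_succ_of_lt h]
  · simp [h]

lemma truncB_self (i : ℕ) (p : ℕ × Bool) (h : p.1 < i ∨ p.2 = false) : truncB i p = p := by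
  obtain ⟨p1, p2⟩ := p
  unfold truncB
  rcases h with h | h
  · simp at h ⊢
    simp [h]
  · simp at h
    subst h
    simp

def gm (i : ℕ) : (bigC F y0).X → (stC F y0 i).X :=
  Sum.map id fun u => ⟨⟨truncB i u.down⟩, truncB_mem i u.down⟩

def stepg (i : ℕ) : (stC F y0 (i+1)).X → (stC F y0 i).X :=
  Sum.map id fun q => ⟨⟨truncB i q.1.down⟩, truncB_mem i q.1.down⟩

lemma stepg_gm (i : ℕ) (x : (bigC F y0).X) :
    stepg F y0 i (gm F y0 (i+1) x) = gm F y0 i x := by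
  cases x with
  | inl y => rfl
  | inr u =>
    simp only [gm, stepg, Sum.map_inr]
    show Sum.inr _ = Sum.inr _
    congr 1
    apply Subtype.ext
    exact congrArg ULift.up (truncB_truncB i u.down)

def seqT : ChuSeq S :=
  ⟨stC F y0, fun i => ⟨id, stepg F y0 i, by intro a x; cases x <;> rfl⟩⟩

def bigCocone : Cocone (seqT F y0) (bigC F y0) :=
  ⟨fun i => ⟨id, gm F y0 i, by intro a x; cases x <;> rfl⟩,
   fun i => hom_ext (fun _ => rfl) (fun x => stepg_gm F y0 i x)⟩

def IsThread (t : ∀ i, (stC F y0 i).X) : Prop := ∀ i, stepg F y0 i (t (i+1)) = t i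

lemma gm_thread (x : (bigC F y0).X) : IsThread F y0 (fun i => gm F y0 i x) :=
  fun i => stepg_gm F y0 i x

lemma thread_down {t s : ∀ i, (stC F y0 i).X} (ht : IsThread F y0 t) (hs : IsThread F y0 s)
    {n : ℕ} (h : t n = s n) : ∀ i, i ≤ n → t i = s i := by
  have key : ∀ k j, j + k = n → t j = s j := by
    intro k
    induction k with
    | zero =>
      intro j hj
      have : j = n := by omega
      subst this; exact h
    | succ k ih =>
      intro j hj
      have h1 := ih (j+1) (by omega)
      rw [← ht j, ← hs j, h1]
  intro i hi
  exact key (n - i) i (by omega)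

def lvl : (bigC F y0).X → ℕ := Sum.elim (fun _ => 0) fun u => u.down.1 + 1

lemma lift_unique (i : ℕ) (u : (stC F y0 (i+1)).X) (x : (bigC F y0).X)
    (hlvl : lvl F y0 x ≤ i) (h : stepg F y0 i u = gm F y0 i x) : u = gm F y0 (i+1) x := by
  cases u with
  | inl y' =>
    cases x with
    | inl y =>
      have : (Sum.inl y' : (stC F y0 i).X) = Sum.inl y := h
      rw [Sum.inl.inj this]; rfl
    | inr v => exact (Sum.inl_ne_inr h).elim
  | inr q =>
    cases x with
    | inl y => exact (Sum.inr_ne_inl h).elim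
    | inr v =>
      obtain ⟨⟨⟨m', ε'⟩⟩, hq⟩ := q
      obtain ⟨⟨m, ε⟩⟩ := v
      have hm : m < i := by simpa [lvl] using hlvl
      have h' : truncB i (m', ε') = truncB i (m, ε) :=
        congrArg (Sum.elim (fun _ : F.X => ((0, false) : ℕ × Bool)) (fun q : Qt i => q.1.down)) h
      have h1 : m' = m := congrArg Prod.fst h'
      subst h1
      have h2 : ε' = ε := by
        have h'' := congrArg Prod.snd h'
        simpa [truncB, hm, decide_true, Bool.and_true] using h''
      subst h2
      apply congrArg Sum.inr
      apply Subtype.ext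
      exact congrArg ULift.up (truncB_self (i+1) (m', ε') (Or.inl (Nat.lt_succ_of_lt hm))).symm

lemma thread_up {t : ∀ i, (stC F y0 i).X} (ht : IsThread F y0 t) (x : (bigC F y0).X)
    (n : ℕ) (hn : lvl F y0 x ≤ n) (h : t n = gm F y0 n x) :
    ∀ k, t (n + k) = gm F y0 (n + k) x := by
  intro k
  induction k with
  | zero => exact h
  | succ k ih =>
    exact lift_unique F y0 (n+k) (t (n+k+1)) x (by omega) (by rw [ht (n+k), ih])

lemma thread_eq {t : ∀ i, (stC F y0 i).X} (ht : IsThread F y0 t) (x : (bigC F y0).X)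
    (n : ℕ) (hn : lvl F y0 x ≤ n) (h : t n = gm F y0 n x) : ∀ i, t i = gm F y0 i x := by
  intro i
  rcases Nat.le_total i n with hle | hle
  · exact thread_down F y0 ht (gm_thread F y0 x) h i hle
  · obtain ⟨k, rfl⟩ := Nat.le.dest hle
    exact thread_up F y0 ht x n hn h k

lemma thread_realize {t : ∀ i, (stC F y0 i).X} (ht : IsThread F y0 t) :
    ∃ x, ∀ i, t i = gm F y0 i x := by
  cases h1 : t 1 with
  | inl y =>
    refine ⟨Sum.inl y, thread_eq F y0 ht (Sum.inl y) 1 (by simp [lvl]) ?_⟩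
    exact h1
  | inr q =>
    obtain ⟨⟨⟨m, ε⟩⟩, hq⟩ := q
    have fstp : ∀ k, ∃ (ε' : Bool) (h' : (ULift.up.{u} (m, ε')).down.1 < 1 + k ∨
        (ULift.up.{u} (m, ε')).down.2 = false),
        t (1+k) = Sum.inr (⟨⟨(m, ε')⟩, h'⟩ : Qt (1+k)) := by
      intro k
      induction k with
      | zero => exact ⟨ε, hq, h1⟩
      | succ k ih =>
        obtain ⟨ε', h', hk⟩ := ih
        have hrec := ht (1+k)
        cases h2 : t (1+k+1) with
        | inl y =>
          rw [h2, hk] at hrec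
          exact (Sum.inl_ne_inr hrec).elim
        | inr q'' =>
          obtain ⟨⟨⟨m'', ε''⟩⟩, h''⟩ := q''
          rw [h2, hk] at hrec
          have hval : truncB (1+k) (m'', ε'') = (m, ε') :=
            congrArg (Sum.elim (fun _ : F.X => ((0, false) : ℕ × Bool))
              (fun q : Qt (1+k) => q.1.down)) hrec
          have hm'' : m'' = m := congrArg Prod.fst hval
          subst hm''
          exact ⟨ε'', h'', rfl⟩
    obtain ⟨ε₂, h₂, ht2⟩ := fstp (m+1)
    refine ⟨Sum.inr ⟨(m, ε₂)⟩, thread_eq F y0 ht (Sum.inr ⟨(m, ε₂)⟩) (1+(m+1))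
      (by simp only [lvl, Sum.elim_inr]; omega) ?_⟩
    rw [ht2]
    apply congrArg Sum.inr
    apply Subtype.ext
    exact congrArg ULift.up (truncB_self (1+(m+1)) (m, ε₂) (Or.inl (by omega))).symm

def extf (i : ℕ) : (stC F y0 i).X → (bigC F y0).X := Sum.map id Subtype.val

lemma extf_gm (x : (bigC F y0).X) (i : ℕ) (h : lvl F y0 x ≤ i) :
    extf F y0 i (gm F y0 i x) = x := by
  cases x with
  | inl y => rfl
  | inr u =>
    obtain ⟨⟨m, ε⟩⟩ := u
    have hm : m < i := by simpa [lvl] using h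
    simp only [extf, gm, Sum.map_inr]
    apply congrArg Sum.inr
    exact congrArg ULift.up (truncB_self i (m, ε) (Or.inl hm))

lemma gm_inj {x₁ x₂ : (bigC F y0).X} (h : ∀ i, gm F y0 i x₁ = gm F y0 i x₂) : x₁ = x₂ := by
  set N := lvl F y0 x₁ + lvl F y0 x₂ with hN
  calc x₁ = extf F y0 N (gm F y0 N x₁) := (extf_gm F y0 x₁ N (by omega)).symm
    _ = extf F y0 N (gm F y0 N x₂) := by rw [h N]
    _ = x₂ := extf_gm F y0 x₂ N (by omega)

theorem notFiniteObj_of_notext (y1 : F.X) (hne : y0 ≠ y1) (hcol : ∀ a, F.r a y0 = F.r a y1) :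
    ¬ FiniteObjIn (fun _ => True) (fun _ _ φ => IsMonoC φ) F := by
  classical
  intro hF
  have hTmor : ∀ i, IsMonoC ((seqT F y0).φ i) := by
    intro i
    refine ⟨fun a b h => h, ?_⟩
    rintro (y | ⟨⟨⟨m, ε⟩⟩, hq⟩)
    · exact ⟨Sum.inl y, rfl⟩
    · refine ⟨Sum.inr ⟨⟨(m, ε)⟩, ?_⟩, ?_⟩
      · rcases hq with h | h
        · exact Or.inl (Nat.lt_succ_of_lt h)
        · exact Or.inr h
      · apply congrArg Sum.inr
        apply Subtype.ext
        exact congrArg ULift.up (truncB_self i (m, ε) hq)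
  have hcmor : ∀ i, IsMonoC ((bigCocone F y0).ψ i) := by
    intro i
    refine ⟨fun a b h => h, ?_⟩
    rintro (y | ⟨⟨⟨m, ε⟩⟩, hq⟩)
    · exact ⟨Sum.inl y, rfl⟩
    · refine ⟨Sum.inr ⟨(m, ε)⟩, ?_⟩
      apply congrArg Sum.inr
      apply Subtype.ext
      exact congrArg ULift.up (truncB_self i (m, ε) hq)
  have hcolim : IsColimit (fun _ => True) (fun _ _ φ => IsMonoC φ)
      (seqT F y0) (bigC F y0) (bigCocone F y0) := by
    refine ⟨trivial, hcmor, ?_⟩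
    intro C' _ c' hm'
    have hthread : ∀ x', IsThread F y0 (fun i => (c'.ψ i).g x') :=
      fun x' i => congrFun (congrArg ChuHom.g (c'.compat i)) x'
    have hreal : ∀ x', ∃ x, ∀ i, (c'.ψ i).g x' = gm F y0 i x :=
      fun x' => thread_realize F y0 (hthread x')
    choose mug hmug using hreal
    have hfconst : ∀ i, (c'.ψ i).f = (c'.ψ 0).f := by
      intro i
      induction i with
      | zero => rfl
      | succ i ih =>
        rw [← ih]
        funext a
        exact congrFun (congrArg ChuHom.f (c'.compat i)) a
    refine ⟨⟨(c'.ψ 0).f, mug, ?_⟩, ⟨⟨?_, ?_⟩, ?_⟩, ?_⟩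
    · intro a x'
      rw [(c'.ψ 0).comm a x', hmug x' 0]
      cases mug x' <;> rfl
    · exact (hm' 0).1
    · intro x
      obtain ⟨x', hx'⟩ := (hm' (lvl F y0 x)).2 (gm F y0 (lvl F y0 x) x)
      have hall : ∀ i, (c'.ψ i).g x' = gm F y0 i x :=
        thread_eq F y0 (hthread x') x (lvl F y0 x) le_rfl hx'
      refine ⟨x', gm_inj F y0 (fun i => ?_)⟩
      rw [← hmug x' i, hall i]
    · intro i
      apply hom_ext
      · intro a
        exact (congrFun (hfconst i) a).symm
      · intro x'
        exact (hmug x' i).symm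
    · rintro μ' ⟨hμ'm, hμ'c⟩
      apply hom_ext
      · intro a
        exact congrFun (congrArg ChuHom.f (hμ'c 0)) a
      · intro x'
        apply gm_inj F y0
        intro i
        have h1 := congrFun (congrArg ChuHom.g (hμ'c i)) x'
        rw [show gm F y0 i (μ'.g x') = (c'.ψ i).g x' from h1, hmug x' i]
  let φ : ChuHom F (bigC F y0) :=
    ⟨id, Sum.elim id (fun u => if u.down.2 then y1 else y0), by
      intro a x
      cases x with
      | inl y => rfl
      | inr u =>
        simp only [Sum.elim_inr]
        by_cases h : u.down.2
        · rw [if_pos h]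
          exact hcol a
        · rw [if_neg h]
          rfl⟩
  have hφm : IsMonoC φ := ⟨fun a b h => h, fun y => ⟨Sum.inl y, rfl⟩⟩
  obtain ⟨i, ψ, hψm, hfac⟩ := hF.2 (seqT F y0) (fun _ => trivial) hTmor
    (bigC F y0) (bigCocone F y0) hcolim φ hφm
  have h1 := congrFun (congrArg ChuHom.g hfac) (Sum.inr ⟨(i, true)⟩)
  have h0 := congrFun (congrArg ChuHom.g hfac) (Sum.inr ⟨(i, false)⟩)
  have hsame : gm F y0 i (Sum.inr ⟨(i, true)⟩) = gm F y0 i (Sum.inr ⟨(i, false)⟩) := by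
    apply congrArg Sum.inr
    apply Subtype.ext
    apply congrArg ULift.up
    simp [truncB]
  have e1 : ψ.g (gm F y0 i (Sum.inr ⟨(i, true)⟩)) = y1 := h1
  have e0 : ψ.g (gm F y0 i (Sum.inr ⟨(i, false)⟩)) = y0 := h0
  rw [hsame] at e1
  exact hne (e0.symm.trans e1)

end ExtCase
end Stmt16Aux

/-- `F = (B, s, Y)` is a finite object of `iC` iff `B` is finite and `F` is
extensional; in that case `|Y| ≤ |S| ^ |B|`. -/
theorem stmt16 {S : Type u} (h2 : ∃ σ τ : S, σ ≠ τ) (F : ChuSpace S) :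
    (FiniteObjIn (fun _ => True) (fun _ _ φ => IsMonoC φ) F ↔
      (Finite F.A ∧ ChuExtensional F)) ∧
    (FiniteObjIn (fun _ => True) (fun _ _ φ => IsMonoC φ) F →
      Cardinal.mk F.X ≤ Cardinal.mk S ^ Cardinal.mk F.A) := by
  have hiff : FiniteObjIn (fun _ => True) (fun _ _ φ => IsMonoC φ) F ↔
      (Finite F.A ∧ ChuExtensional F) := by
    constructor
    · intro h
      constructor
      · by_contra hfin
        have : Infinite F.A := not_finite_iff_infinite.mp hfin
        exact Stmt16Aux.notFiniteObj_of_infinite F (Infinite.natEmbedding F.A) h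
      · intro x y hxy
        by_contra hne
        exact Stmt16Aux.notFiniteObj_of_notext F x y hne hxy h
    · rintro ⟨hfin, hext⟩
      exact Stmt16Aux.suff F hfin hext
  refine ⟨hiff, ?_⟩
  intro h
  have hext := (hiff.mp h).2
  have hinj : Function.Injective (fun (x : F.X) (a : F.A) => F.r a x) := by
    intro x y hxy
    exact hext x y (fun a => congrFun hxy a)
  calc Cardinal.mk F.X ≤ Cardinal.mk (F.A → S) := Cardinal.mk_le_of_injective hinj
    _ = Cardinal.mk S ^ Cardinal.mk F.A := (Cardinal.power_def S F.A).symm
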